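/- For the diffusion dW_t = dB_t + μ(W_t)dt, where μ is the step function equal to the constant μ_j on the interval (j, j+1], the embedded walk on ℤ has transition probabilities p_j = r(μ_{j−1}) / (r(μ_{j−1}) + r(−μ_j)), where r(u) = (e^{2u} − 1)/u for u ≠ 0 and r(0) = 2, and p_j is the probability that W started at j hits j+1 before j−1. -/

import Mathlib

open MeasureTheory intervalIntegral Real

/-- The piecewise-constant drift equal to `μf j` on the interval `(j, j+1]`. -/
noncomputable def stepDrift (μf : ℤ → ℝ) (x : ℝ) : ℝ := μf (⌈x⌉ - 1)

/-- The scale function `S(x) = 2∫₀ˣ exp(-2∫₀ʸ μ(z) dz) dy` of the diffusion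
`dW = dB + μ(W) dt`. -/
noncomputable def scaleFn (μf : ℤ → ℝ) (x : ℝ) : ℝ :=
  2 * ∫ y in (0:ℝ)..x, Real.exp (-2 * ∫ z in (0:ℝ)..y, stepDrift μf z)

/-- `r(u) = (e^{2u} - 1)/u` for `u ≠ 0`, `r(0) = 2`. -/
noncomputable def rFun (u : ℝ) : ℝ :=
  if u = 0 then 2 else (Real.exp (2 * u) - 1) / u

lemma stepDrift_eq (μf : ℤ → ℝ) (k : ℤ) (z : ℝ) (h1 : (k:ℝ) < z) (h2 : z ≤ (k:ℝ) + 1) :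
    stepDrift μf z = μf k := by
  have : ⌈z⌉ = k + 1 := by
    rw [Int.ceil_eq_iff]
    push_cast
    constructor <;> linarith
  simp [stepDrift, this]

lemma stepDrift_measurable (μf : ℤ → ℝ) : Measurable (stepDrift μf) := by
  have : Measurable fun x : ℝ => (⌈x⌉ - 1 : ℤ) := Int.measurable_ceil.sub measurable_const
  exact (measurable_from_top (f := μf)).comp this

lemma stepDrift_intervalIntegrable (μf : ℤ → ℝ) (a b : ℝ) :
    IntervalIntegrable (stepDrift μf) volume a b := by
  rw [intervalIntegrable_iff]
  set F : Finset ℤ := Finset.Icc ⌈min a b⌉ ⌈max a b⌉ ∪ {0}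
  have hFne : F.Nonempty := ⟨0, by simp [F]⟩
  set M : ℝ := F.sup' hFne (fun k => |μf (k - 1)|)
  apply Measure.integrableOn_of_bounded (M := M)
  · simp [Set.uIoc, measure_Ioc_lt_top.ne]
  · exact (stepDrift_measurable μf).aestronglyMeasurable
  · apply ae_restrict_of_forall_mem measurableSet_uIoc
    intro x hx
    have h1 : min a b < x := hx.1
    have h2 : x ≤ max a b := hx.2
    have hmem : ⌈x⌉ ∈ F := by
      simp only [F, Finset.mem_union, Finset.mem_Icc]
      left
      exact ⟨Int.ceil_le_ceil h1.le, Int.ceil_le_ceil h2⟩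
    calc ‖stepDrift μf x‖ = |μf (⌈x⌉ - 1)| := rfl
      _ ≤ M := Finset.le_sup' (fun k => |μf (k - 1)|) hmem

/-- The inner integral. -/
noncomputable def innerI (μf : ℤ → ℝ) (y : ℝ) : ℝ := ∫ z in (0:ℝ)..y, stepDrift μf z

lemma innerI_continuous (μf : ℤ → ℝ) : Continuous (innerI μf) :=
  intervalIntegral.continuous_primitive (fun a b => stepDrift_intervalIntegrable μf a b) 0

lemma innerI_seg (μf : ℤ → ℝ) (k : ℤ) (y : ℝ) (h1 : (k:ℝ) ≤ y) (h2 : y ≤ (k:ℝ) + 1) :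
    innerI μf y = innerI μf k + μf k * (y - k) := by
  have hadd : innerI μf y - innerI μf k = ∫ z in (k:ℝ)..y, stepDrift μf z :=
    integral_interval_sub_left (stepDrift_intervalIntegrable μf 0 y)
      (stepDrift_intervalIntegrable μf 0 k)
  have hcongr : (∫ z in (k:ℝ)..y, stepDrift μf z) = ∫ z in (k:ℝ)..y, μf k := by
    apply intervalIntegral.integral_congr_ae
    filter_upwards with z hz
    rw [Set.uIoc_of_le h1] at hz
    exact stepDrift_eq μf k z hz.1 (hz.2.trans h2)
  rw [hcongr, intervalIntegral.integral_const, smul_eq_mul] at hadd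
  linarith [hadd]

lemma outer_integrable (μf : ℤ → ℝ) (a b : ℝ) :
    IntervalIntegrable (fun y => Real.exp (-2 * innerI μf y)) volume a b :=
  (Real.continuous_exp.comp ((continuous_const.mul (innerI_continuous μf)))).intervalIntegrable a b

lemma scale_diff (μf : ℤ → ℝ) (a b : ℝ) :
    scaleFn μf b - scaleFn μf a = 2 * ∫ y in a..b, Real.exp (-2 * innerI μf y) := by
  unfold scaleFn
  rw [← mul_sub]
  congr 1
  exact integral_interval_sub_left (outer_integrable μf 0 b) (outer_integrable μf 0 a)

/-- `f u = ∫₀¹ exp(-2 u t) dt`, in closed form -/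
noncomputable def fFun (u : ℝ) : ℝ := if u = 0 then 1 else (Real.exp (-2*u) - 1) / (-2*u)

lemma exp_seg (c p : ℝ) : (∫ y in (0:ℝ)..1, Real.exp (c + p * y)) =
    Real.exp c * (if p = 0 then 1 else (Real.exp p - 1) / p) := by
  by_cases hp : p = 0
  · simp [hp]
  · have key : ∀ y ∈ Set.uIcc (0:ℝ) 1, HasDerivAt (fun y => Real.exp (c + p * y) / p)
        (Real.exp (c + p * y)) y := by
      intro y _
      have h1 : HasDerivAt (fun y : ℝ => c + p * y) p y := by
        simpa using ((hasDerivAt_id y).const_mul p).const_add c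
      have h2 := (h1.exp).div_const p
      convert h2 using 1
      · rfl
      · rfl
      · rw [mul_div_assoc, div_self hp, mul_one]
    rw [intervalIntegral.integral_eq_sub_of_hasDerivAt key
      ((Real.continuous_exp.comp (by continuity)).intervalIntegrable 0 1)]
    simp only [hp, if_false]
    rw [Real.exp_add]
    field_simp
    ring

lemma seg_integral (μf : ℤ → ℝ) (k : ℤ) :
    (∫ y in (k:ℝ)..((k:ℝ)+1), Real.exp (-2 * innerI μf y)) =
      Real.exp (-2 * innerI μf k) * fFun (μf k) := by
  have hcongr : (∫ y in (k:ℝ)..((k:ℝ)+1), Real.exp (-2 * innerI μf y)) =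
      ∫ y in (k:ℝ)..((k:ℝ)+1), Real.exp ((-2 * innerI μf k) + (-2 * μf k) * (y - k)) := by
    apply intervalIntegral.integral_congr
    intro y hy
    rw [Set.uIcc_of_le (by linarith)] at hy
    show Real.exp (-2 * innerI μf y) = Real.exp (-2 * innerI μf k + -2 * μf k * (y - k))
    rw [innerI_seg μf k y hy.1 hy.2]
    ring_nf
  rw [hcongr]
  have := intervalIntegral.integral_comp_sub_right
    (fun y => Real.exp ((-2 * innerI μf k) + (-2 * μf k) * y)) (k:ℝ)
    (a := (k:ℝ)) (b := (k:ℝ)+1)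
  simp only [sub_self, add_sub_cancel_left] at this
  rw [this, exp_seg]
  congr 1
  unfold fFun
  by_cases h : μf k = 0 <;> simp [h]

lemma fFun_pos (u : ℝ) : 0 < fFun u := by
  unfold fFun
  by_cases h : u = 0
  · simp [h]
  · simp only [h, if_false]
    rcases lt_or_gt_of_ne h with hu | hu
    · apply div_pos
      · have : (1:ℝ) < Real.exp (-2*u) := by
          rw [Real.one_lt_exp_iff]; linarith
        linarith
      · linarith
    · apply div_pos_of_neg_of_neg
      · have : Real.exp (-2*u) < 1 := by
          rw [Real.exp_lt_one_iff]; linarith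
        linarith
      · linarith

lemma fFun_eq_rFun_neg (u : ℝ) : fFun u = rFun (-u) / 2 := by
  unfold fFun rFun
  by_cases h : u = 0
  · simp [h]
  · have h2 : (2:ℝ) * -u = -2 * u := by ring
    simp only [h, neg_eq_zero, if_false, h2]
    rw [div_div, show -u * 2 = -2 * u from by ring]

lemma fFun_eq_exp_rFun (u : ℝ) : fFun u = Real.exp (-2*u) * rFun u / 2 := by
  unfold fFun rFun
  by_cases h : u = 0
  · simp [h]
  · simp only [h, if_false]
    have key : Real.exp (-2*u) * (Real.exp (2*u) - 1) = 1 - Real.exp (-2*u) := by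
      rw [mul_sub, ← Real.exp_add]
      norm_num
    have hstep : Real.exp (-2*u) * ((Real.exp (2*u) - 1) / u) = (1 - Real.exp (-2*u)) / u := by
      rw [mul_div_assoc', key]
    rw [hstep, div_div,
      show Real.exp (-2*u) - 1 = -(1 - Real.exp (-2*u)) from by ring,
      show (-2:ℝ) * u = -(u * 2) from by ring, neg_div_neg_eq]

theorem stmt_18 (μf : ℤ → ℝ) (j : ℤ) :
    (scaleFn μf j - scaleFn μf ((j : ℝ) - 1)) /
      (scaleFn μf ((j : ℝ) + 1) - scaleFn μf ((j : ℝ) - 1)) =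
    rFun (μf (j - 1)) / (rFun (μf (j - 1)) + rFun (-(μf j))) := by
  have hjm : ((j:ℝ) - 1) = ((j - 1 : ℤ) : ℝ) := by push_cast; ring
  have hA : scaleFn μf j - scaleFn μf ((j:ℝ) - 1) =
      2 * (Real.exp (-2 * innerI μf ((j-1:ℤ):ℝ)) * fFun (μf (j-1))) := by
    rw [scale_diff, hjm, ← seg_integral μf (j-1)]
    congr 2 <;> push_cast <;> ring
  have hB : scaleFn μf ((j:ℝ)+1) - scaleFn μf (j:ℝ) =
      2 * (Real.exp (-2 * innerI μf (j:ℝ)) * fFun (μf j)) := by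
    rw [scale_diff, ← seg_integral μf j]
  have hIj : innerI μf (j:ℝ) = innerI μf ((j-1:ℤ):ℝ) + μf (j-1) := by
    have := innerI_seg μf (j-1) (j:ℝ) (by push_cast; linarith) (by push_cast; linarith)
    push_cast at this ⊢
    rw [this]; push_cast; ring
  have hABsum : scaleFn μf ((j:ℝ)+1) - scaleFn μf ((j:ℝ)-1) =
      2 * (Real.exp (-2 * innerI μf ((j-1:ℤ):ℝ)) * fFun (μf (j-1)))
      + 2 * (Real.exp (-2 * innerI μf (j:ℝ)) * fFun (μf j)) := by
    rw [← hA, ← hB]; ring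
  set e := Real.exp (-2 * innerI μf ((j-1:ℤ):ℝ)) with he
  have hepos : 0 < e := Real.exp_pos _
  have hexpj : Real.exp (-2 * innerI μf (j:ℝ)) = e * Real.exp (-2 * μf (j-1)) := by
    rw [he, hIj, ← Real.exp_add]; ring_nf
  rw [hA, hABsum, hexpj]
  rw [fFun_eq_exp_rFun (μf (j-1)), fFun_eq_rFun_neg (μf j)]
  have h1 : 0 < rFun (μf (j-1)) := by
    have := fFun_pos (μf (j-1))
    rw [fFun_eq_exp_rFun] at this
    nlinarith [Real.exp_pos (-2 * μf (j-1))]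
  have h2 : 0 < rFun (-(μf j)) := by
    have := fFun_pos (μf j)
    rw [fFun_eq_rFun_neg] at this
    linarith
  have hex : (0:ℝ) < Real.exp (-2 * μf (j-1)) := Real.exp_pos _
  rw [div_eq_div_iff]
  · ring
  · nlinarith [mul_pos (mul_pos hepos hex) h1, mul_pos (mul_pos hepos hex) h2]
  · nlinarith [mul_pos (mul_pos hepos hex) h1, mul_pos (mul_pos hepos hex) h2]
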